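/- arXiv:1411.1919 — 9 statements merged into one kernel-verified Lean document; each statement's English description precedes it below -/
import Mathlib

section
/- (Lemma 2) Suppose M is a perfect matching of G and the duals y, z satisfy relaxed complementary slackness: (i) z(B) ≥ 0 for every odd set B; (ii) whenever z(B) > 0, M contains exactly ⌊|B|/2⌋ edges with both endpoints in B (active blossoms); (iii) yz(e) ≥ w(e) − 2 for every edge e (near domination); (iv) yz(e) ≤ w(e) for every e ∈ M (near tightness). Then w(M) ≥ w(M*) − n, where M* is any maximum weight perfect matching and n = |V|. -/
open Finset
open scoped Classical

/-- `yz(e)` for an edge `e = {u,v}`: `y u + y v + ∑_{B ⊇ {u,v}} z B`. -/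
noncomputable def yzE {V : Type*} [Fintype V] (y : V → ℤ) (z : Finset V → ℤ) : Sym2 V → ℤ :=
  Sym2.lift ⟨fun u v => y u + y v + ∑ B ∈ Finset.univ.filter (fun B : Finset V => u ∈ B ∧ v ∈ B), z B,
    fun u v => by
      dsimp only
      rw [add_comm (y u) (y v)]
      congr 1
      apply Finset.sum_congr _ (fun _ _ => rfl)
      ext B
      simp [and_comm]⟩

/-- `M` is a matching of `G`: a set of edges of `G`, pairwise vertex-disjoint. -/
def IsMatchingF {V : Type*} (G : SimpleGraph V) (M : Finset (Sym2 V)) : Prop :=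
  (∀ e ∈ M, e ∈ G.edgeSet) ∧ ∀ e ∈ M, ∀ f ∈ M, e ≠ f → ∀ v : V, v ∈ e → v ∉ f

/-- A matching is perfect if every vertex is covered. -/
def IsPerfectF {V : Type*} (M : Finset (Sym2 V)) : Prop := ∀ v : V, ∃ e ∈ M, v ∈ e

/-- A vertex is free (unmatched) if it lies on no edge of `M`. -/
def isFreeV {V : Type*} (M : Finset (Sym2 V)) (v : V) : Prop := ∀ e ∈ M, v ∉ e

/-- The edges of `M` with both endpoints in `B` (i.e. `M ∩ E(B)`). -/
noncomputable def edgesWithin {V : Type*} (M : Finset (Sym2 V)) (B : Finset V) : Finset (Sym2 V) :=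
  M.filter (fun e => ∀ v ∈ e, v ∈ B)

/-- The dual objective `yz(V) = ∑ y(v) + ∑_B z(B)·⌊|B|/2⌋`. -/
noncomputable def dualObj {V : Type*} [Fintype V] (y : V → ℤ) (z : Finset V → ℤ) : ℤ :=
  (∑ v, y v) + ∑ B : Finset V, z B * ((B.card / 2 : ℕ) : ℤ)

section Aux
variable {V : Type*} [Fintype V]

lemma filter_mem_sym2 (u v : V) (h : u ≠ v) :
    (Finset.univ.filter (· ∈ s(u,v)) : Finset V) = {u, v} := by
  ext x; simp [Sym2.mem_iff]

lemma card_filter_mem (e : Sym2 V) (he : ¬ e.IsDiag) :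
    (Finset.univ.filter (· ∈ e)).card = 2 := by
  induction e using Sym2.ind with
  | _ u v =>
    rw [Sym2.mk_isDiag_iff] at he
    rw [filter_mem_sym2 u v he, Finset.card_pair he]

lemma mem_edgesWithin {M : Finset (Sym2 V)} {B : Finset V} {e : Sym2 V} :
    e ∈ edgesWithin M B ↔ e ∈ M ∧ ∀ v ∈ e, v ∈ B := by
  rw [edgesWithin, Finset.filter_congr_decidable, Finset.mem_filter]

lemma yzE_eq (y : V → ℤ) (z : Finset V → ℤ) (e : Sym2 V) (he : ¬ e.IsDiag) :
    yzE y z e = (∑ v ∈ Finset.univ.filter (· ∈ e), y v)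
      + ∑ B ∈ Finset.univ.filter (fun B : Finset V => ∀ v ∈ e, v ∈ B), z B := by
  induction e using Sym2.ind with
  | _ u v =>
    rw [Sym2.mk_isDiag_iff] at he
    rw [yzE, Sym2.lift_mk]
    dsimp only
    rw [filter_mem_sym2 u v he, Finset.sum_pair he]
    congr 1
    apply Finset.sum_congr _ (fun _ _ => rfl)
    ext B
    simp [Sym2.mem_iff, or_imp, forall_and, forall_eq]

lemma sum_vertex (M : Finset (Sym2 V))
    (hM : ∀ e ∈ M, ∀ f ∈ M, e ≠ f → ∀ v : V, v ∈ e → v ∉ f)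
    (hMp : IsPerfectF M) (f : V → ℤ) :
    ∑ e ∈ M, ∑ v ∈ Finset.univ.filter (· ∈ e), f v = ∑ v, f v := by
  have h1 : ∀ e ∈ M, ∑ v ∈ Finset.univ.filter (· ∈ e), f v
      = ∑ v, if v ∈ e then f v else 0 := by
    intro e _; rw [Finset.sum_filter]
  rw [Finset.sum_congr rfl h1, Finset.sum_comm]
  apply Finset.sum_congr rfl
  intro v _
  obtain ⟨e₀, he₀, hv⟩ := hMp v
  have hfil : M.filter (fun e => v ∈ e) = {e₀} := by
    ext g
    simp only [Finset.mem_filter, Finset.mem_singleton]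
    constructor
    · rintro ⟨hg, hvg⟩
      by_contra hne
      exact hM g hg e₀ he₀ hne v hvg hv
    · rintro rfl; exact ⟨he₀, hv⟩
  rw [← Finset.sum_filter, hfil, Finset.sum_singleton]

lemma sum_blossom (M : Finset (Sym2 V)) (z : Finset V → ℤ) :
    ∑ e ∈ M, ∑ B ∈ Finset.univ.filter (fun B : Finset V => ∀ v ∈ e, v ∈ B), z B
      = ∑ B : Finset V, z B * ((edgesWithin M B).card : ℤ) := by
  have h1 : ∀ e ∈ M, (∑ B ∈ Finset.univ.filter (fun B : Finset V => ∀ v ∈ e, v ∈ B), z B)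
      = ∑ B : Finset V, if (∀ v ∈ e, v ∈ B) then z B else 0 := by
    intro e _; rw [Finset.sum_filter]
  rw [Finset.sum_congr rfl h1, Finset.sum_comm]
  apply Finset.sum_congr rfl
  intro B _
  have h2 : ∀ e ∈ M, (if (∀ v ∈ e, v ∈ B) then z B else 0)
      = if e ∈ edgesWithin M B then z B else 0 := by
    intro e he
    by_cases h : ∀ v ∈ e, v ∈ B
    · rw [if_pos h, if_pos (mem_edgesWithin.mpr ⟨he, h⟩)]
    · rw [if_neg h, if_neg (fun hc => h (mem_edgesWithin.mp hc).2)]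
  rw [Finset.sum_congr rfl h2, ← Finset.sum_filter,
    Finset.filter_mem_eq_inter, Finset.inter_eq_right.mpr
      (fun e he => mem_edgesWithin.mp he |>.1),
    Finset.sum_const, nsmul_eq_mul, mul_comm]

lemma card_edgesWithin_le (M : Finset (Sym2 V))
    (hnd : ∀ e ∈ M, ¬ e.IsDiag)
    (hM : ∀ e ∈ M, ∀ f ∈ M, e ≠ f → ∀ v : V, v ∈ e → v ∉ f)
    (B : Finset V) : (edgesWithin M B).card ≤ B.card / 2 := by
  rw [Nat.le_div_iff_mul_le (by norm_num)]
  have hsub : (edgesWithin M B).biUnion (fun e => Finset.univ.filter (· ∈ e)) ⊆ B := by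
    intro v hv
    simp only [Finset.mem_biUnion, Finset.mem_filter] at hv
    obtain ⟨e, he, _, hve⟩ := hv
    exact (mem_edgesWithin.mp he).2 v hve
  have hdisj : ∀ e ∈ edgesWithin M B, ∀ f ∈ edgesWithin M B, e ≠ f →
      Disjoint (Finset.univ.filter (· ∈ e)) (Finset.univ.filter (· ∈ f)) := by
    intro e he f hf hne
    rw [Finset.disjoint_left]
    intro v hv hv'
    exact hM e (mem_edgesWithin.mp he).1 f (mem_edgesWithin.mp hf).1 hne v
      (Finset.mem_filter.mp hv).2 (Finset.mem_filter.mp hv').2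
  have h2 : ∀ e ∈ edgesWithin M B, (Finset.univ.filter (· ∈ e)).card = 2 :=
    fun e he => card_filter_mem e (hnd e (mem_edgesWithin.mp he).1)
  calc (edgesWithin M B).card * 2
      = ∑ e ∈ edgesWithin M B, (Finset.univ.filter (· ∈ e)).card := by
        rw [(Finset.sum_congr rfl h2 : _ = ∑ _e ∈ edgesWithin M B, 2),
          Finset.sum_const, smul_eq_mul, mul_comm]
    _ = ((edgesWithin M B).biUnion (fun e => Finset.univ.filter (· ∈ e))).card :=
        (Finset.card_biUnion hdisj).symm
    _ ≤ B.card := Finset.card_le_card hsub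

end Aux

/-- Lemma 2: relaxed complementary slackness implies the perfect matching `M`
is within `n = |V|` of the maximum weight perfect matching `Mstar`. -/
theorem approx_of_relaxed_complementary_slackness {V : Type*} [Fintype V] (G : SimpleGraph V)
    (w : Sym2 V → ℤ) (y : V → ℤ) (z : Finset V → ℤ)
    (hsupp : ∀ B : Finset V, z B ≠ 0 → Odd B.card ∧ 3 ≤ B.card)
    (M : Finset (Sym2 V)) (hM : IsMatchingF G M) (hMp : IsPerfectF M)
    (hz : ∀ B : Finset V, Odd B.card → 0 ≤ z B)
    (hactive : ∀ B : Finset V, 0 < z B → (edgesWithin M B).card = B.card / 2)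
    (hneardom : ∀ e ∈ G.edgeSet, w e - 2 ≤ yzE y z e)
    (hneartight : ∀ e ∈ M, yzE y z e ≤ w e)
    (Mstar : Finset (Sym2 V)) (hMs : IsMatchingF G Mstar) (hMsp : IsPerfectF Mstar)
    (hmax : ∀ M'' : Finset (Sym2 V), IsMatchingF G M'' → IsPerfectF M'' →
      ∑ e ∈ M'', w e ≤ ∑ e ∈ Mstar, w e) :
    (∑ e ∈ Mstar, w e) - (Fintype.card V : ℤ) ≤ ∑ e ∈ M, w e := by
  have hndM : ∀ e ∈ M, ¬ e.IsDiag := fun e he => G.not_isDiag_of_mem_edgeSet (hM.1 e he)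
  have hndMs : ∀ e ∈ Mstar, ¬ e.IsDiag := fun e he => G.not_isDiag_of_mem_edgeSet (hMs.1 e he)
  have key : ∀ (N : Finset (Sym2 V)), (∀ e ∈ N, ¬ e.IsDiag) →
      (∀ e ∈ N, ∀ f ∈ N, e ≠ f → ∀ v : V, v ∈ e → v ∉ f) → IsPerfectF N →
      ∑ e ∈ N, yzE y z e = (∑ v, y v) + ∑ B : Finset V, z B * ((edgesWithin N B).card : ℤ) := by
    intro N hnd hdisj hperf
    rw [Finset.sum_congr rfl (fun e he => yzE_eq y z e (hnd e he)),
      Finset.sum_add_distrib, sum_vertex N hdisj hperf y, sum_blossom]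
  have zpos : ∀ B : Finset V, z B ≠ 0 → 0 < z B := fun B h =>
    lt_of_le_of_ne (hz B (hsupp B h).1) (Ne.symm h)
  have hSM : ∑ e ∈ M, yzE y z e = dualObj y z := by
    rw [key M hndM hM.2 hMp, dualObj]
    congr 1
    apply Finset.sum_congr rfl
    intro B _
    by_cases h : z B = 0
    · simp [h]
    · rw [hactive B (zpos B h)]
  have hSMs : ∑ e ∈ Mstar, yzE y z e ≤ dualObj y z := by
    rw [key Mstar hndMs hMs.2 hMsp, dualObj]
    apply add_le_add le_rfl
    apply Finset.sum_le_sum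
    intro B _
    by_cases h : z B = 0
    · simp [h]
    · exact mul_le_mul_of_nonneg_left
        (by exact_mod_cast card_edgesWithin_le Mstar hndMs hMs.2 B) (le_of_lt (zpos B h))
  have hcard : (2 * Mstar.card : ℤ) = (Fintype.card V : ℤ) := by
    have h := sum_vertex Mstar hMs.2 hMsp (fun _ => (1 : ℤ))
    have h2 : ∀ e ∈ Mstar, ∑ _v ∈ Finset.univ.filter (· ∈ e), (1 : ℤ) = 2 := by
      intro e he
      rw [Finset.sum_const, card_filter_mem e (hndMs e he)]
      norm_num
    rw [Finset.sum_congr rfl h2, Finset.sum_const, Finset.sum_const, Finset.card_univ] at h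
    simp only [nsmul_eq_mul, mul_one] at h
    linarith
  have h1 : ∑ e ∈ Mstar, w e ≤ ∑ e ∈ Mstar, yzE y z e + (Fintype.card V : ℤ) := by
    calc ∑ e ∈ Mstar, w e ≤ ∑ e ∈ Mstar, (yzE y z e + 2) :=
          Finset.sum_le_sum (fun e he => by linarith [hneardom e (hMs.1 e he)])
      _ = ∑ e ∈ Mstar, yzE y z e + 2 * Mstar.card := by
          rw [Finset.sum_add_distrib, Finset.sum_const, nsmul_eq_mul]; push_cast; ring
      _ = _ := by rw [hcard]
  have h2 : dualObj y z ≤ ∑ e ∈ M, w e := by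
    rw [← hSM]; exact Finset.sum_le_sum hneartight
  linarith [hSMs]
end

section
/- Suppose M is a perfect matching of G, yz(e) ≤ w(e) for every e ∈ M (near tightness), and whenever z(B) ≠ 0, M contains exactly ⌊|B|/2⌋ edges with both endpoints in B (active blossoms). Then w(M) ≥ Σ_{v∈V} y(v) + Σ_B z(B)·⌊|B|/2⌋; that is, the weight of M is at least the dual objective yz(V). -/
open Finset
open scoped Classical

/-- for a perfect matching satisfying near tightness and active blossoms,
the weight of `M` is at least the dual objective `yz(V)`. -/
theorem dualObj_le_weight {V : Type*} [Fintype V] (G : SimpleGraph V)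
    (w : Sym2 V → ℤ) (y : V → ℤ) (z : Finset V → ℤ)
    (hsupp : ∀ B : Finset V, z B ≠ 0 → Odd B.card ∧ 3 ≤ B.card)
    (M : Finset (Sym2 V)) (hM : IsMatchingF G M) (hMp : IsPerfectF M)
    (hneartight : ∀ e ∈ M, yzE y z e ≤ w e)
    (hactive : ∀ B : Finset V, z B ≠ 0 → (edgesWithin M B).card = B.card / 2) :
    dualObj y z ≤ ∑ e ∈ M, w e := by

  have hle : ∑ e ∈ M, yzE y z e ≤ ∑ e ∈ M, w e := Finset.sum_le_sum hneartight
  refine le_trans (le_of_eq ?_) hle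
  have hsplit : ∀ e ∈ M, yzE y z e =
      (∑ v ∈ Finset.univ.filter (· ∈ e), y v)
      + ∑ B ∈ Finset.univ.filter (fun B : Finset V => ∀ v ∈ e, v ∈ B), z B := by
    intro e he
    induction e using Sym2.inductionOn with
    | hf a b =>
      have hadj : G.Adj a b := hM.1 _ he
      have hab : a ≠ b := hadj.ne
      have h1 : (Finset.univ.filter (· ∈ s(a, b))) = ({a, b} : Finset V) := by
        ext v; simp [Sym2.mem_iff]
      have h2 : (Finset.univ.filter (fun B : Finset V => ∀ v ∈ s(a, b), v ∈ B))
          = Finset.univ.filter (fun B : Finset V => a ∈ B ∧ b ∈ B) := by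
        apply Finset.filter_congr; intro B _
        constructor
        · intro h; exact ⟨h a (by simp), h b (by simp)⟩
        · rintro ⟨ha, hb⟩ v hv
          rcases Sym2.mem_iff.mp hv with rfl | rfl
          · exact ha
          · exact hb
      rw [h1, h2, Finset.sum_pair hab]
      simp [yzE]
  rw [Finset.sum_congr rfl hsplit, Finset.sum_add_distrib]
  have hy : ∑ e ∈ M, ∑ v ∈ Finset.univ.filter (· ∈ e), y v = ∑ v, y v := by
    have : ∀ e ∈ M, ∑ v ∈ Finset.univ.filter (· ∈ e), y v
        = ∑ v : V, if v ∈ e then y v else 0 := by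
      intro e _; rw [Finset.sum_filter]
    rw [Finset.sum_congr rfl this, Finset.sum_comm]
    apply Finset.sum_congr rfl
    intro v _
    have hcard : (M.filter (fun e => v ∈ e)).card = 1 := by
      obtain ⟨e, he, hve⟩ := hMp v
      rw [Finset.card_eq_one]
      refine ⟨e, ?_⟩
      ext f
      simp only [Finset.mem_filter, Finset.mem_singleton]
      constructor
      · rintro ⟨hf, hvf⟩
        by_contra hne
        exact hM.2 f hf e he hne v hvf hve
      · rintro rfl; exact ⟨he, hve⟩
    rw [← Finset.sum_filter]
    rw [Finset.sum_const, hcard, one_smul]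
  have hz : ∑ e ∈ M, ∑ B ∈ Finset.univ.filter (fun B : Finset V => ∀ v ∈ e, v ∈ B), z B
      = ∑ B : Finset V, z B * ((B.card / 2 : ℕ) : ℤ) := by
    have : ∀ e ∈ M, ∑ B ∈ Finset.univ.filter (fun B : Finset V => ∀ v ∈ e, v ∈ B), z B
        = ∑ B : Finset V, if (∀ v ∈ e, v ∈ B) then z B else 0 := by
      intro e _; rw [Finset.sum_filter]
    rw [Finset.sum_congr rfl this, Finset.sum_comm]
    apply Finset.sum_congr rfl
    intro B _
    have h3 : ∑ e ∈ M, (if (∀ v ∈ e, v ∈ B) then z B else 0)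
        = ((edgesWithin M B).card : ℤ) * z B := by
      rw [← Finset.sum_filter, Finset.sum_const, nsmul_eq_mul]
      have hEW : M.filter (fun e => ∀ v ∈ e, v ∈ B) = edgesWithin M B := by
        unfold edgesWithin; congr
      rw [hEW]
    rw [h3]
    by_cases hzB : z B = 0
    · simp [hzB]
    · rw [hactive B hzB]; ring
  rw [hy, hz]
  rfl
end

section
/- Suppose M is a (not necessarily perfect) matching of G and the duals y, z satisfy: (i) z(B) ≥ 0 for every odd set B; (ii) whenever z(B) > 0, M contains exactly ⌊|B|/2⌋ edges with both endpoints in B (active blossoms); (iii) yz(e) ≥ w(e) − 2 for every edge e (near domination); (iv) yz(e) ≤ w(e) for every e ∈ M (near tightness). Then for every perfect matching M' of G, w(M') ≤ w(M) + Σ_{u not matched by M} y(u) + 2|M'|. -/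
open Finset
open scoped Classical

noncomputable def eF {V : Type*} [Fintype V] (e : Sym2 V) : Finset V :=
  Finset.univ.filter (fun v => v ∈ e)

lemma eF_pair {V : Type*} [Fintype V] (u v : V) : eF s(u,v) = {u, v} := by
  ext x; simp [eF, Sym2.mem_iff]

lemma eF_card {V : Type*} [Fintype V] (G : SimpleGraph V) (e : Sym2 V)
    (he : e ∈ G.edgeSet) : (eF e).card = 2 := by
  induction e with
  | _ u v =>
    have huv : u ≠ v := (G.mem_edgeSet.mp he).ne
    rw [eF_pair, Finset.card_pair huv]

lemma yzE_decomp {V : Type*} [Fintype V] (G : SimpleGraph V) (y : V → ℤ) (z : Finset V → ℤ)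
    (e : Sym2 V) (he : e ∈ G.edgeSet) :
    yzE y z e = (∑ v ∈ eF e, y v) +
      ∑ B ∈ Finset.univ.filter (fun B : Finset V => ∀ v ∈ e, v ∈ B), z B := by
  induction e with
  | _ u v =>
    have huv : u ≠ v := (G.mem_edgeSet.mp he).ne
    have h2 : (Finset.univ.filter (fun B : Finset V => ∀ w ∈ (s(u,v) : Sym2 V), w ∈ B))
        = Finset.univ.filter (fun B : Finset V => u ∈ B ∧ v ∈ B) := by
      apply Finset.filter_congr
      intro B _
      simp [Sym2.mem_iff, forall_eq_or_imp]
    rw [eF_pair, h2, Finset.sum_pair huv]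
    simp [yzE]

lemma matching_pairwise {V : Type*} [Fintype V] (G : SimpleGraph V) (N : Finset (Sym2 V))
    (hN : IsMatchingF G N) : (↑N : Set (Sym2 V)).PairwiseDisjoint eF := by
  intro e he f hf hef
  simp only [Function.onFun]
  rw [Finset.disjoint_left]
  intro v hv hv'
  simp only [eF, Finset.mem_filter] at hv hv'
  exact hN.2 e he f hf hef v hv.2 hv'.2

lemma matched_sum {V : Type*} [Fintype V] (G : SimpleGraph V) (N : Finset (Sym2 V))
    (hN : IsMatchingF G N) (g : V → ℤ) :
    (∑ e ∈ N, ∑ v ∈ eF e, g v) = ∑ v ∈ N.biUnion eF, g v :=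
  (Finset.sum_biUnion (matching_pairwise G N hN)).symm

lemma swap_sum {V : Type*} [Fintype V] (z : Finset V → ℤ) (N : Finset (Sym2 V)) :
    (∑ e ∈ N, ∑ B ∈ Finset.univ.filter (fun B : Finset V => ∀ v ∈ e, v ∈ B), z B)
      = ∑ B : Finset V, z B * ((edgesWithin N B).card : ℤ) := by
  have h : ∀ e : Sym2 V, (∑ B ∈ Finset.univ.filter (fun B : Finset V => ∀ v ∈ e, v ∈ B), z B)
      = ∑ B : Finset V, if (∀ v ∈ e, v ∈ B) then z B else 0 := by
    intro e; rw [Finset.sum_filter]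
  simp_rw [h]
  rw [Finset.sum_comm]
  apply Finset.sum_congr rfl
  intro B _
  rw [← Finset.sum_filter, Finset.sum_const, nsmul_eq_mul, mul_comm]
  congr 2
  congr 1
  ext e
  simp only [edgesWithin, Finset.mem_filter]

lemma count_bound {V : Type*} [Fintype V] (G : SimpleGraph V) (N : Finset (Sym2 V))
    (hN : IsMatchingF G N) (B : Finset V) :
    (edgesWithin N B).card ≤ B.card / 2 := by
  rw [Nat.le_div_iff_mul_le two_pos]
  have hsub : edgesWithin N B ⊆ N := by
    intro e he
    simp only [edgesWithin, Finset.mem_filter] at he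
    exact he.1
  have hdisj : (↑(edgesWithin N B) : Set (Sym2 V)).PairwiseDisjoint eF :=
    Set.PairwiseDisjoint.subset (matching_pairwise G N hN) (Finset.coe_subset.mpr hsub)
  calc (edgesWithin N B).card * 2 = ∑ e ∈ edgesWithin N B, (eF e).card := by
        rw [Finset.sum_congr rfl (fun e he => eF_card G e (hN.1 e (hsub he))), Finset.sum_const,
          smul_eq_mul]
    _ = ((edgesWithin N B).biUnion eF).card := (Finset.card_biUnion hdisj).symm
    _ ≤ B.card := by
        apply Finset.card_le_card
        intro v hv
        simp only [Finset.mem_biUnion, eF, Finset.mem_filter, edgesWithin] at hv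
        obtain ⟨e, he, _, hve⟩ := hv
        exact he.2 v hve

/-- under relaxed complementary slackness for a (not necessarily perfect)
matching `M`, every perfect matching `M'` satisfies
`w(M') ≤ w(M) + ∑_{u free in M} y(u) + 2|M'|`. -/
theorem perfect_weight_le_of_relaxedCS {V : Type*} [Fintype V] (G : SimpleGraph V)
    (w : Sym2 V → ℤ) (y : V → ℤ) (z : Finset V → ℤ)
    (hsupp : ∀ B : Finset V, z B ≠ 0 → Odd B.card ∧ 3 ≤ B.card)
    (M : Finset (Sym2 V)) (hM : IsMatchingF G M)
    (hz : ∀ B : Finset V, Odd B.card → 0 ≤ z B)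
    (hactive : ∀ B : Finset V, 0 < z B → (edgesWithin M B).card = B.card / 2)
    (hneardom : ∀ e ∈ G.edgeSet, w e - 2 ≤ yzE y z e)
    (hneartight : ∀ e ∈ M, yzE y z e ≤ w e)
    (M' : Finset (Sym2 V)) (hM' : IsMatchingF G M') (hM'p : IsPerfectF M') :
    ∑ e ∈ M', w e ≤
      (∑ e ∈ M, w e) + (∑ u ∈ Finset.univ.filter (fun u => isFreeV M u), y u)
        + 2 * (M'.card : ℤ) := by
  classical
  have hznn : ∀ B : Finset V, 0 ≤ z B := by
    intro B
    by_cases h : z B = 0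
    · simp [h]
    · exact hz B (hsupp B h).1
  -- decompose yz sums over both matchings
  have hdecM' : (∑ e ∈ M', yzE y z e)
      = (∑ v ∈ M'.biUnion eF, y v) + ∑ B : Finset V, z B * ((edgesWithin M' B).card : ℤ) := by
    rw [Finset.sum_congr rfl (fun e he => yzE_decomp G y z e (hM'.1 e he)), Finset.sum_add_distrib,
      matched_sum G M' hM', swap_sum]
  have hdecM : (∑ e ∈ M, yzE y z e)
      = (∑ v ∈ M.biUnion eF, y v) + ∑ B : Finset V, z B * ((edgesWithin M B).card : ℤ) := by
    rw [Finset.sum_congr rfl (fun e he => yzE_decomp G y z e (hM.1 e he)), Finset.sum_add_distrib,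
      matched_sum G M hM, swap_sum]
  -- M' covers all vertices
  have hcover : M'.biUnion eF = Finset.univ := by
    ext v
    simp only [Finset.mem_biUnion, eF, Finset.mem_filter, Finset.mem_univ, iff_true, true_and]
    obtain ⟨e, he, hve⟩ := hM'p v
    exact ⟨e, he, hve⟩
  -- split vertices by freeness for M
  have hsplit : (∑ v, y v) = (∑ v ∈ M.biUnion eF, y v)
      + ∑ u ∈ Finset.univ.filter (fun u => isFreeV M u), y u := by
    have hfree : Finset.univ.filter (fun u => isFreeV M u) = Finset.univ \ M.biUnion eF := by
      ext v
      rw [Finset.mem_filter]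
      simp only [Finset.mem_filter, Finset.mem_univ, true_and, Finset.mem_sdiff,
        Finset.mem_biUnion, eF, isFreeV]
      aesop
    rw [hfree, Finset.sum_sdiff_eq_sub (Finset.subset_univ _)]
    ring
  -- crossing-count bounds
  have hboundM' : ∑ B : Finset V, z B * ((edgesWithin M' B).card : ℤ)
      ≤ ∑ B : Finset V, z B * ((B.card / 2 : ℕ) : ℤ) := by
    apply Finset.sum_le_sum
    intro B _
    exact mul_le_mul_of_nonneg_left (by exact_mod_cast count_bound G M' hM' B) (hznn B)
  have hboundM : ∑ B : Finset V, z B * ((edgesWithin M B).card : ℤ)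
      = ∑ B : Finset V, z B * ((B.card / 2 : ℕ) : ℤ) := by
    apply Finset.sum_congr rfl
    intro B _
    by_cases h : z B = 0
    · simp [h]
    · rw [hactive B (lt_of_le_of_ne (hznn B) (Ne.symm h))]
  -- chain of inequalities
  have h1 : ∑ e ∈ M', w e ≤ (∑ e ∈ M', yzE y z e) + 2 * (M'.card : ℤ) := by
    have : ∑ e ∈ M', w e ≤ ∑ e ∈ M', (yzE y z e + 2) :=
      Finset.sum_le_sum (fun e he => by linarith [hneardom e (hM'.1 e he)])
    rw [Finset.sum_add_distrib, Finset.sum_const, nsmul_eq_mul] at this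
    linarith
  have h2 : (∑ e ∈ M, yzE y z e) ≤ ∑ e ∈ M, w e := Finset.sum_le_sum hneartight
  rw [hdecM', hcover] at h1
  rw [hdecM, hboundM] at h2
  linarith [hsplit, hboundM', h1, h2]
end

section
/- (Lemma 9) Suppose z(B) ≥ 0 for every odd set B, every edge e = (u,v) satisfies w(e) ≤ Σ_{B ⊇ {u,v}} z(B), and M' is a perfect matching of G satisfying w(M') ≥ Σ_B z(B)·⌊|B|/2⌋ − 8n. Then for every (not necessarily perfect) matching M'' of G, w(M'') ≤ w(M') + 8n. -/
open Finset
open scoped Classical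

/-- Lemma 9: if in addition `M'` is a perfect matching with
`w(M') ≥ ∑_B z(B)·⌊|B|/2⌋ - 8n`, then every matching `M''` satisfies
`w(M'') ≤ w(M') + 8n`. -/
theorem matching_weight_le_perfect_add {V : Type*} [Fintype V] (G : SimpleGraph V)
    (w : Sym2 V → ℤ) (z : Finset V → ℤ) (n : ℤ)
    (hVcard : (Fintype.card V : ℤ) ≤ 2 * n)
    (hsupp : ∀ B : Finset V, z B ≠ 0 → Odd B.card ∧ 3 ≤ B.card)
    (hz : ∀ B : Finset V, Odd B.card → 0 ≤ z B)
    (hdom : ∀ e ∈ G.edgeSet, w e ≤ yzE (fun _ => 0) z e)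
    (M' : Finset (Sym2 V)) (hM' : IsMatchingF G M') (hM'p : IsPerfectF M')
    (hM'w : (∑ B : Finset V, z B * ((B.card / 2 : ℕ) : ℤ)) - 8 * n ≤ ∑ e ∈ M', w e) :
    ∀ M'' : Finset (Sym2 V), IsMatchingF G M'' →
      ∑ e ∈ M'', w e ≤ (∑ e ∈ M', w e) + 8 * n := by
  intro M'' hM''
  have hcard : ∀ B : Finset V, (edgesWithin M'' B).card ≤ B.card / 2 := by
    intro B
    rw [Nat.le_div_iff_mul_le (by norm_num : 0 < 2)]
    have hdisj : ((edgesWithin M'' B) : Set (Sym2 V)).PairwiseDisjoint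
        (fun e => Finset.univ.filter (· ∈ e)) := by
      intro e he f hf hef
      simp only [edgesWithin, Finset.coe_filter, Set.mem_setOf_eq] at he hf
      simp only [Function.onFun]
      rw [Finset.disjoint_left]
      intro v hv hv'
      simp only [Finset.mem_filter] at hv hv'
      exact hM''.2 e he.1 f hf.1 hef v hv.2 hv'.2
    have hbu : (edgesWithin M'' B).biUnion (fun e => Finset.univ.filter (· ∈ e)) ⊆ B := by
      intro v hv
      simp only [Finset.mem_biUnion, Finset.mem_filter] at hv
      obtain ⟨e, he, _, hve⟩ := hv
      simp only [edgesWithin, Finset.mem_filter] at he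
      exact he.2 v hve
    have hcard2 : ∀ e ∈ edgesWithin M'' B, (Finset.univ.filter (· ∈ e)).card = 2 := by
      intro e he
      simp only [edgesWithin, Finset.mem_filter] at he
      have hG := hM''.1 e he.1
      induction e using Sym2.ind with
      | _ u v =>
        rw [SimpleGraph.mem_edgeSet] at hG
        have huv : u ≠ v := G.ne_of_adj hG
        have : Finset.univ.filter (· ∈ (s(u, v) : Sym2 V)) = {u, v} := by
          ext x; simp [Sym2.mem_iff]
        rw [this, Finset.card_insert_of_notMem (by simp [huv]), Finset.card_singleton]
    calc (edgesWithin M'' B).card * 2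
        = ∑ e ∈ edgesWithin M'' B, (Finset.univ.filter (· ∈ e)).card := by
          rw [Finset.sum_congr rfl hcard2, Finset.sum_const, smul_eq_mul]
      _ = ((edgesWithin M'' B).biUnion (fun e => Finset.univ.filter (· ∈ e))).card :=
          (Finset.card_biUnion hdisj).symm
      _ ≤ B.card := Finset.card_le_card hbu
  have key : ∑ e ∈ M'', w e ≤ ∑ B : Finset V, z B * ((B.card / 2 : ℕ) : ℤ) := by
    calc ∑ e ∈ M'', w e ≤ ∑ e ∈ M'', yzE (fun _ => 0) z e :=
          Finset.sum_le_sum fun e he => hdom e (hM''.1 e he)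
      _ = ∑ e ∈ M'', ∑ B ∈ Finset.univ.filter (fun B : Finset V => ∀ v ∈ e, v ∈ B), z B := by
          apply Finset.sum_congr rfl
          intro e _
          induction e using Sym2.ind with
          | _ u v =>
            simp only [yzE, Sym2.lift_mk, zero_add]
            apply Finset.sum_congr _ (fun _ _ => rfl)
            apply Finset.filter_congr
            intro B _
            constructor
            · intro ⟨h1, h2⟩ x hx
              rw [Sym2.mem_iff] at hx
              rcases hx with rfl | rfl <;> assumption
            · intro h
              exact ⟨h u (by simp), h v (by simp)⟩
      _ = ∑ B : Finset V, ∑ e ∈ M''.filter (fun e => ∀ v ∈ e, v ∈ B), z B := by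
          simp_rw [Finset.sum_filter]
          rw [Finset.sum_comm]
      _ = ∑ B : Finset V, z B * ((edgesWithin M'' B).card : ℤ) := by
          apply Finset.sum_congr rfl
          intro B _
          rw [Finset.sum_const, nsmul_eq_mul, edgesWithin, mul_comm]
          congr 1
          norm_cast
          congr 1
          convert rfl using 2
      _ ≤ ∑ B : Finset V, z B * ((B.card / 2 : ℕ) : ℤ) := by
          apply Finset.sum_le_sum
          intro B _
          by_cases hzB : z B = 0
          · simp [hzB]
          · have h0 : 0 ≤ z B := hz B (hsupp B hzB).1
            exact mul_le_mul_of_nonneg_left (by exact_mod_cast hcard B) h0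
  linarith
end

section
/- (Lemma 6) Let w' : E → ℤ, y' : V → ℤ, z' : Finset V → ℤ be the weights and duals from the previous scale, satisfying near domination: y'z'(e) ≥ w'(e) − 2 for every edge e. Define new weights and duals by w(e) = 2(w'(e) + b(e)) where b(e) ∈ {0,1}, y(u) = 2y'(u) + 3 for every vertex u, and z(B) = 2z'(B) for every set B. Then: (i) w(e) ≤ yz(e) for every edge e; and (ii) for every edge e with y'z'(e) ≤ w'(e) (in particular old matched and blossom edges satisfying near tightness), w(e) ≥ yz(e) − 6. -/
open Finset
open scoped Classical

theorem yzE_rescale {V : Type*} [Fintype V] (y y' : V → ℤ) (z z' : Finset V → ℤ)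
    (hy : ∀ u : V, y u = 2 * y' u + 3)
    (hz : ∀ B : Finset V, z B = 2 * z' B) (e : Sym2 V) :
    yzE y z e = 2 * yzE y' z' e + 6 := by
  induction e using Sym2.ind with
  | _ u v =>
    simp only [yzE, Sym2.lift_mk, hy, hz, two_mul, Finset.sum_add_distrib]
    ring

/-- Lemma 6: rescaling duals. With `w(e) = 2(w'(e) + b(e))`, `b(e) ∈ {0,1}`,
`y(u) = 2y'(u) + 3`, `z(B) = 2z'(B)`, near domination for the old duals gives
`w(e) ≤ yz(e)` for all edges, and any edge with `y'z'(e) ≤ w'(e)` satisfies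
`w(e) ≥ yz(e) - 6`. -/
theorem rescaling_duals {V : Type*} [Fintype V] (G : SimpleGraph V)
    (w w' b : Sym2 V → ℤ) (y y' : V → ℤ) (z z' : Finset V → ℤ)
    (hneardom : ∀ e ∈ G.edgeSet, w' e - 2 ≤ yzE y' z' e)
    (hb : ∀ e ∈ G.edgeSet, b e = 0 ∨ b e = 1)
    (hw : ∀ e : Sym2 V, w e = 2 * (w' e + b e))
    (hy : ∀ u : V, y u = 2 * y' u + 3)
    (hz : ∀ B : Finset V, z B = 2 * z' B) :
    (∀ e ∈ G.edgeSet, w e ≤ yzE y z e) ∧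
    (∀ e ∈ G.edgeSet, yzE y' z' e ≤ w' e → yzE y z e - 6 ≤ w e) := by
  constructor
  · intro e he
    have h1 := hneardom e he
    have h2 := hb e he
    have h3 := yzE_rescale y y' z z' hy hz e
    rcases h2 with h | h <;> rw [hw e, h3] <;> linarith
  · intro e he hle
    have h2 := hb e he
    have h3 := yzE_rescale y y' z z' hy hz e
    rcases h2 with h | h <;> rw [hw e, h3] <;> linarith
end

section
/- (Liquidation preserves domination) Let B₀ be an odd set with z(B₀) ≥ 0 and z(B₀) even. Define new duals by y₂(u) = y(u) + z(B₀)/2 for u ∈ B₀ and y₂(u) = y(u) otherwise, z₂(B₀) = 0 and z₂(B) = z(B) for B ≠ B₀. Then for every edge e: if e has exactly one endpoint in B₀ then y₂z₂(e) = yz(e) + z(B₀)/2, and otherwise y₂z₂(e) = yz(e). Consequently, if yz(e) ≥ w(e) for every edge e, then y₂z₂(e) ≥ w(e) for every edge e. -/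
open Finset
open scoped Classical

/-- liquidating the blossom `B₀` (moving `z(B₀)/2` onto the `y`-values of
its vertices) increases `yz(e)` by `z(B₀)/2` for edges with exactly one endpoint in `B₀`
and leaves it unchanged otherwise; consequently domination is preserved. -/
theorem liquidation_preserves_domination {V : Type*} [Fintype V] (G : SimpleGraph V)
    (w : Sym2 V → ℤ) (y y₂ : V → ℤ) (z z₂ : Finset V → ℤ)
    (B₀ : Finset V) (hodd : Odd B₀.card) (hnn : 0 ≤ z B₀) (heven : Even (z B₀))
    (hy₂ : ∀ u : V, y₂ u = if u ∈ B₀ then y u + z B₀ / 2 else y u)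
    (hz₂B₀ : z₂ B₀ = 0) (hz₂ : ∀ B : Finset V, B ≠ B₀ → z₂ B = z B) :
    (∀ u v : V, G.Adj u v →
      (Xor' (u ∈ B₀) (v ∈ B₀) → yzE y₂ z₂ s(u,v) = yzE y z s(u,v) + z B₀ / 2) ∧
      (¬ Xor' (u ∈ B₀) (v ∈ B₀) → yzE y₂ z₂ s(u,v) = yzE y z s(u,v))) ∧
    ((∀ e ∈ G.edgeSet, w e ≤ yzE y z e) → ∀ e ∈ G.edgeSet, w e ≤ yzE y₂ z₂ e) := by
  have hhalf : z B₀ / 2 + z B₀ / 2 = z B₀ := by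
    obtain ⟨k, hk⟩ := heven; omega
  have main : ∀ u v : V,
      (Xor' (u ∈ B₀) (v ∈ B₀) → yzE y₂ z₂ s(u,v) = yzE y z s(u,v) + z B₀ / 2) ∧
      (¬ Xor' (u ∈ B₀) (v ∈ B₀) → yzE y₂ z₂ s(u,v) = yzE y z s(u,v)) := by
    intro u v
    have h1 : yzE y z s(u,v) = y u + y v +
        ∑ B ∈ Finset.univ.filter (fun B : Finset V => u ∈ B ∧ v ∈ B), z B := rfl
    have h2 : yzE y₂ z₂ s(u,v) = y₂ u + y₂ v +
        ∑ B ∈ Finset.univ.filter (fun B : Finset V => u ∈ B ∧ v ∈ B), z₂ B := rfl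
    set S := Finset.univ.filter (fun B : Finset V => u ∈ B ∧ v ∈ B) with hS
    by_cases hu : u ∈ B₀ <;> by_cases hv : v ∈ B₀
    · have hmem : B₀ ∈ S := by simp [hS, hu, hv]
      have herase : ∑ B ∈ S.erase B₀, z₂ B = ∑ B ∈ S.erase B₀, z B :=
        Finset.sum_congr rfl (fun B hB => hz₂ B (Finset.ne_of_mem_erase hB))
      have hsum : ∑ B ∈ S, z₂ B = (∑ B ∈ S, z B) - z B₀ := by
        rw [← Finset.sum_erase_add S z₂ hmem, ← Finset.sum_erase_add S z hmem, hz₂B₀, herase]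
        ring
      refine ⟨fun hx => absurd hx (by simp [Xor', hu, hv]), fun _ => ?_⟩
      rw [h1, h2, hsum, hy₂ u, hy₂ v, if_pos hu, if_pos hv]
      linarith [hhalf]
    · have hnot : B₀ ∉ S := by simp [hS, hv]
      have hsum : ∑ B ∈ S, z₂ B = ∑ B ∈ S, z B :=
        Finset.sum_congr rfl (fun B hB => hz₂ B (fun h => hnot (h ▸ hB)))
      refine ⟨fun _ => ?_, fun hx => absurd (by simp [Xor', hu, hv]) hx⟩
      rw [h1, h2, hsum, hy₂ u, hy₂ v, if_pos hu, if_neg hv]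
      ring
    · have hnot : B₀ ∉ S := by simp [hS, hu]
      have hsum : ∑ B ∈ S, z₂ B = ∑ B ∈ S, z B :=
        Finset.sum_congr rfl (fun B hB => hz₂ B (fun h => hnot (h ▸ hB)))
      refine ⟨fun _ => ?_, fun hx => absurd (by simp [Xor', hu, hv]) hx⟩
      rw [h1, h2, hsum, hy₂ u, hy₂ v, if_neg hu, if_pos hv]
      ring
    · have hnot : B₀ ∉ S := by simp [hS, hu]
      have hsum : ∑ B ∈ S, z₂ B = ∑ B ∈ S, z B :=
        Finset.sum_congr rfl (fun B hB => hz₂ B (fun h => hnot (h ▸ hB)))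
      refine ⟨fun hx => absurd hx (by simp [Xor', hu, hv]), fun _ => ?_⟩
      rw [h1, h2, hsum, hy₂ u, hy₂ v, if_neg hu, if_neg hv]
  refine ⟨fun u v _ => main u v, fun hdom e he => ?_⟩
  induction e with
  | h u v =>
    have hle := hdom s(u,v) he
    by_cases hx : Xor' (u ∈ B₀) (v ∈ B₀)
    · rw [(main u v).1 hx]
      have h2 : 0 ≤ z B₀ / 2 := by positivity
      linarith
    · rw [(main u v).2 hx]; exact hle
end

section
/- (Lemma 3) Let M be a matching of G and F a set of free vertices. Call an edge e eligible (with respect to M) if either e ∉ M and yz(e) = w(e) − 2, or e ∈ M and yz(e) = w(e). Let Ψ be a maximal set of vertex-disjoint augmenting paths in the eligible subgraph, each with at least one endpoint in F, and let M₂ = M ⊕ ⋃_{P∈Ψ} P be the matching obtained by augmenting along all paths of Ψ. Then the subgraph of edges eligible with respect to M₂ contains no augmenting path for M₂ with an endpoint in F. -/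
open Finset
open scoped Classical

/-- An edge is *eligible* (Criterion 2) w.r.t. the matching `M` if it is unmatched with
`yz(e) = w(e) - 2`, or matched with `yz(e) = w(e)`. -/
def eligible {V : Type*} [Fintype V] (w : Sym2 V → ℤ) (y : V → ℤ) (z : Finset V → ℤ)
    (M : Finset (Sym2 V)) (e : Sym2 V) : Prop :=
  (e ∉ M ∧ yzE y z e = w e - 2) ∨ (e ∈ M ∧ yzE y z e = w e)

/-- `p 0, p 1, …, p L` is an augmenting path for the matching `M` inside the subgraph of
edges satisfying `elig`: it is a simple path of `G` with an odd number `L` of edges, all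
eligible, alternating (edge `i` is matched iff `i` is odd), whose two endpoints are free. -/
def IsAugPath {V : Type*} (G : SimpleGraph V) (elig : Sym2 V → Prop)
    (M : Finset (Sym2 V)) (p : ℕ → V) (L : ℕ) : Prop :=
  Odd L ∧
  (∀ i j, i ≤ L → j ≤ L → p i = p j → i = j) ∧
  (∀ i, i < L → G.Adj (p i) (p (i + 1)) ∧ elig s(p i, p (i + 1))) ∧
  (∀ i, i < L → (s(p i, p (i + 1)) ∈ M ↔ Odd i)) ∧
  isFreeV M (p 0) ∧ isFreeV M (p L)

/-- The set of edges of the path `(p, L)`. -/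
noncomputable def pathEdges {V : Type*} (p : ℕ → V) (L : ℕ) : Finset (Sym2 V) :=
  (Finset.range L).image (fun i => s(p i, p (i + 1)))

/-- Lemma 3: let `Ψ = {P 0, …, P (k-1)}` be a maximal collection of
vertex-disjoint augmenting paths in the eligible subgraph, each with an endpoint in the
set `F` of free vertices, and let `M₂ = M ⊕ ⋃_{P ∈ Ψ} P`. Then the subgraph of edges
eligible w.r.t. `M₂` contains no augmenting path for `M₂` with an endpoint in `F`. -/
theorem no_eligible_augmenting_path_after_augment {V : Type*} [Fintype V]
    (G : SimpleGraph V) (w : Sym2 V → ℤ) (y : V → ℤ) (z : Finset V → ℤ)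
    (M : Finset (Sym2 V)) (hM : IsMatchingF G M)
    (F : Finset V) (hF : ∀ v ∈ F, isFreeV M v)
    (k : ℕ) (P : Fin k → (ℕ → V) × ℕ)
    (hpaths : ∀ i : Fin k, IsAugPath G (eligible w y z M) M (P i).1 (P i).2)
    (hends : ∀ i : Fin k, (P i).1 0 ∈ F ∨ (P i).1 (P i).2 ∈ F)
    (hdisj : ∀ i j : Fin k, i ≠ j →
      ∀ a ≤ (P i).2, ∀ b ≤ (P j).2, (P i).1 a ≠ (P j).1 b)
    (hmax : ∀ (q : ℕ → V) (L : ℕ), IsAugPath G (eligible w y z M) M q L →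
      (q 0 ∈ F ∨ q L ∈ F) → ∃ i : Fin k, ∃ a ≤ L, ∃ b ≤ (P i).2, q a = (P i).1 b)
    (A M₂ : Finset (Sym2 V))
    (hA : A = Finset.univ.biUnion (fun i : Fin k => pathEdges (P i).1 (P i).2))
    (hM₂ : M₂ = (M ∪ A) \ (M ∩ A)) :
    ¬ ∃ (q : ℕ → V) (L : ℕ),
        IsAugPath G (eligible w y z M₂) M₂ q L ∧ (q 0 ∈ F ∨ q L ∈ F) := by
  rintro ⟨q, L, ⟨hLodd, hqinj, hqadj, hqalt, hq0, hqL⟩, hqF⟩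
  have memA : ∀ e, e ∈ A ↔ ∃ i : Fin k, ∃ c < (P i).2, e = s((P i).1 c, (P i).1 (c+1)) := by
    intro e
    simp only [hA, Finset.mem_biUnion, Finset.mem_univ, true_and, pathEdges,
      Finset.mem_image, Finset.mem_range]
    constructor
    · rintro ⟨i, c, hc, rfl⟩; exact ⟨i, c, hc, rfl⟩
    · rintro ⟨i, c, hc, rfl⟩; exact ⟨i, c, hc, rfl⟩
  have memM₂ : ∀ e, e ∈ M₂ ↔ ((e ∈ M ∧ e ∉ A) ∨ (e ∈ A ∧ e ∉ M)) := by
    intro e; simp only [hM₂, Finset.mem_sdiff, Finset.mem_union, Finset.mem_inter]; tauto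
  have eligA : ∀ e ∈ A, eligible w y z M e := by
    intro e he
    rw [memA] at he
    obtain ⟨i, c, hc, rfl⟩ := he
    exact ((hpaths i).2.2.1 c hc).2
  -- key claim: q is vertex-disjoint from every path of Ψ
  have key : ∀ (i : Fin k) (a b : ℕ), a ≤ L → b ≤ (P i).2 → q a ≠ (P i).1 b := by
    intro i a b ha hb hv
    obtain ⟨hLi, hinj, hadj, halt, h0f, hLf⟩ := hpaths i
    -- an even-index (unmatched in M) edge of P i covering vertex b
    obtain ⟨c, hceven, hclt, hbmem⟩ :
        ∃ c, ¬ Odd c ∧ c < (P i).2 ∧ ((P i).1 b = (P i).1 c ∨ (P i).1 b = (P i).1 (c+1)) := by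
      rcases Nat.even_or_odd b with hbe | hbo
      · have hLi1 := Nat.odd_iff.mp hLi
        have hbe1 := Nat.even_iff.mp hbe
        exact ⟨b, by rw [Nat.odd_iff]; omega, by omega, Or.inl rfl⟩
      · have hbo1 := Nat.odd_iff.mp hbo
        have hb1 : b - 1 + 1 = b := by omega
        exact ⟨b - 1, by rw [Nat.odd_iff]; omega, by omega, Or.inr (by rw [hb1])⟩
    have heAA : s((P i).1 c, (P i).1 (c+1)) ∈ A := (memA _).mpr ⟨i, c, hclt, rfl⟩
    have heAnM : s((P i).1 c, (P i).1 (c+1)) ∉ M := fun h => hceven ((halt c hclt).mp h)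
    have heAM₂ : s((P i).1 c, (P i).1 (c+1)) ∈ M₂ := (memM₂ _).mpr (Or.inr ⟨heAA, heAnM⟩)
    have hvin : q a ∈ s((P i).1 c, (P i).1 (c+1)) := by
      rcases hbmem with h | h
      · rw [hv, h]; exact Sym2.mem_mk_left _ _
      · rw [hv, h]; exact Sym2.mem_mk_right _ _
    rcases Nat.lt_or_ge 0 a with hapos | ha0
    swap
    · obtain rfl : a = 0 := by omega
      exact hq0 _ heAM₂ hvin
    rcases Nat.lt_or_ge a L with haL | haLe
    swap
    · obtain rfl : a = L := le_antisymm ha haLe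
      exact hqL _ heAM₂ hvin
    -- interior vertex of q: matched in M₂ by an odd-index edge of q
    obtain ⟨d, hdodd, hdlt, hamem⟩ :
        ∃ d, Odd d ∧ d < L ∧ (q a = q d ∨ q a = q (d+1)) := by
      rcases Nat.even_or_odd a with hae | hao
      · have hae1 := Nat.even_iff.mp hae
        have ha1 : a - 1 + 1 = a := by omega
        exact ⟨a - 1, by rw [Nat.odd_iff]; omega, by omega, Or.inr (by rw [ha1])⟩
      · exact ⟨a, hao, haL, Or.inl rfl⟩
    have heqM₂ : s(q d, q (d+1)) ∈ M₂ := (hqalt d hdlt).mpr hdodd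
    have heqyz : yzE y z s(q d, q (d+1)) = w s(q d, q (d+1)) := by
      rcases (hqadj d hdlt).2 with ⟨h1, _⟩ | ⟨_, h2⟩
      · exact absurd heqM₂ h1
      · exact h2
    have heqnA : s(q d, q (d+1)) ∉ A := by
      intro hin
      have hnm : s(q d, q (d+1)) ∉ M := by
        rcases (memM₂ _).mp heqM₂ with ⟨_, h⟩ | ⟨_, h⟩
        · exact absurd hin h
        · exact h
      rcases eligA _ hin with ⟨_, h⟩ | ⟨hm, _⟩
      · omega
      · exact hnm hm
    have heqM : s(q d, q (d+1)) ∈ M := by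
      rcases (memM₂ _).mp heqM₂ with ⟨h, _⟩ | ⟨h, _⟩
      · exact h
      · exact absurd h heqnA
    have hvineq : q a ∈ s(q d, q (d+1)) := by
      rcases hamem with h | h
      · rw [h]; exact Sym2.mem_mk_left _ _
      · rw [h]; exact Sym2.mem_mk_right _ _
    -- now case on position b in P i
    rcases Nat.lt_or_ge 0 b with hbpos | hb0
    swap
    · obtain rfl : b = 0 := by omega
      exact h0f _ heqM (hv ▸ hvineq)
    rcases Nat.lt_or_ge b (P i).2 with hbL | hbLe
    swap
    · obtain rfl : b = (P i).2 := le_antisymm hb hbLe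
      exact hLf _ heqM (hv ▸ hvineq)
    obtain ⟨d', hd'odd, hd'lt, hbmem'⟩ :
        ∃ d', Odd d' ∧ d' < (P i).2 ∧ ((P i).1 b = (P i).1 d' ∨ (P i).1 b = (P i).1 (d'+1)) := by
      rcases Nat.even_or_odd b with hbe | hbo
      · have hbe1 := Nat.even_iff.mp hbe
        have hb1 : b - 1 + 1 = b := by omega
        exact ⟨b - 1, by rw [Nat.odd_iff]; omega, by omega, Or.inr (by rw [hb1])⟩
      · exact ⟨b, hbo, hbL, Or.inl rfl⟩
    have heMM : s((P i).1 d', (P i).1 (d'+1)) ∈ M := (halt d' hd'lt).mpr hd'odd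
    have heMA : s((P i).1 d', (P i).1 (d'+1)) ∈ A := (memA _).mpr ⟨i, d', hd'lt, rfl⟩
    have hne : s(q d, q (d+1)) ≠ s((P i).1 d', (P i).1 (d'+1)) :=
      fun h => heqnA (h ▸ heMA)
    refine hM.2 _ heqM _ heMM hne (q a) hvineq ?_
    rw [hv]
    rcases hbmem' with h | h
    · rw [h]; exact Sym2.mem_mk_left _ _
    · rw [h]; exact Sym2.mem_mk_right _ _
  -- q's edges avoid A
  have qedgeA : ∀ j, j < L → s(q j, q (j+1)) ∉ A := by
    intro j hj hin
    rcases (memA _).mp hin with ⟨i, c, hc, hEq⟩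
    rw [Sym2.eq_iff] at hEq
    rcases hEq with ⟨h, _⟩ | ⟨h, _⟩
    · exact key i j c (le_of_lt hj) (le_of_lt hc) h
    · exact key i j (c+1) (le_of_lt hj) hc h
  have memtrans : ∀ j, j < L → (s(q j, q (j+1)) ∈ M₂ ↔ s(q j, q (j+1)) ∈ M) := by
    intro j hj
    rw [memM₂]
    have := qedgeA j hj
    tauto
  have haug : IsAugPath G (eligible w y z M) M q L := by
    refine ⟨hLodd, hqinj, ?_, ?_, ?_, ?_⟩
    · intro j hj
      refine ⟨(hqadj j hj).1, ?_⟩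
      have h := (hqadj j hj).2
      have hmt := memtrans j hj
      unfold eligible at h ⊢
      tauto
    · intro j hj
      rw [← memtrans j hj]; exact hqalt j hj
    · intro e heM hmem
      by_cases hA' : e ∈ A
      · rcases (memA _).mp hA' with ⟨i, c, hc, rfl⟩
        rcases Sym2.mem_iff.mp hmem with h | h
        · exact key i 0 c (Nat.zero_le _) (le_of_lt hc) h
        · exact key i 0 (c+1) (Nat.zero_le _) hc h
      · exact hq0 e ((memM₂ e).mpr (Or.inl ⟨heM, hA'⟩)) hmem
    · intro e heM hmem
      by_cases hA' : e ∈ A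
      · rcases (memA _).mp hA' with ⟨i, c, hc, rfl⟩
        rcases Sym2.mem_iff.mp hmem with h | h
        · exact key i L c (le_refl _) (le_of_lt hc) h
        · exact key i L (c+1) (le_refl _) hc h
      · exact hqL e ((memM₂ e).mpr (Or.inl ⟨heM, hA'⟩)) hmem
  obtain ⟨i, a, ha, b, hb, h⟩ := hmax q L haug hqF
  exact key i a b ha hb h
end

section
/- (Dual objective identity under tightness) Let M be a matching of G such that yz(e) = w(e) for every e ∈ M, and such that whenever z(B) ≠ 0, M contains exactly ⌊|B|/2⌋ edges with both endpoints in B. Then Σ_{v∈V} y(v) + Σ_B z(B)·⌊|B|/2⌋ = w(M) + Σ_{u not matched by M} y(u); that is, the dual objective yz(V) equals the weight of M plus the sum of y-values of free vertices. -/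
open Finset
open scoped Classical

/-- if `yz(e) = w(e)` on `M` and `M` has exactly `⌊|B|/2⌋` edges inside each
`B` with `z(B) ≠ 0`, then the dual objective equals `w(M)` plus the `y`-values of the
free vertices. -/
theorem dualObj_eq_weight_add_free {V : Type*} [Fintype V] (G : SimpleGraph V)
    (w : Sym2 V → ℤ) (y : V → ℤ) (z : Finset V → ℤ)
    (hsupp : ∀ B : Finset V, z B ≠ 0 → Odd B.card ∧ 3 ≤ B.card)
    (M : Finset (Sym2 V)) (hM : IsMatchingF G M)
    (htight : ∀ e ∈ M, yzE y z e = w e)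
    (hactive : ∀ B : Finset V, z B ≠ 0 → (edgesWithin M B).card = B.card / 2) :
    dualObj y z = (∑ e ∈ M, w e) + ∑ u ∈ Finset.univ.filter (fun u => isFreeV M u), y u := by
    classical
  -- key: weight of M = endpoint y-sums + blossom z-sums
  have key : ∑ e ∈ M, w e =
      (∑ e ∈ M, ∑ v ∈ Finset.univ.filter (· ∈ e), y v)
      + ∑ e ∈ M, ∑ B ∈ Finset.univ.filter (fun B : Finset V => ∀ v ∈ e, v ∈ B), z B := by
    rw [← Finset.sum_add_distrib]
    apply Finset.sum_congr rfl
    intro e he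
    rw [← htight e he]
    have hne : ¬ e.IsDiag := by
      have := hM.1 e he
      exact G.not_isDiag_of_mem_edgeSet this
    revert hne
    induction e using Sym2.inductionOn with
    | hf u v =>
      intro hne
      have huv : u ≠ v := by simpa using hne
      have h1 : (Finset.univ.filter (· ∈ s(u,v))) = {u, v} := by
        ext x; simp [Sym2.mem_iff]
      have h2 : (Finset.univ.filter (fun B : Finset V => ∀ x ∈ s(u,v), x ∈ B))
          = Finset.univ.filter (fun B : Finset V => u ∈ B ∧ v ∈ B) := by
        ext B; simp [Sym2.mem_iff]
      rw [h1, h2, Finset.sum_pair huv]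
      simp [yzE]
  -- z part
  have hz : ∑ B : Finset V, z B * ((B.card / 2 : ℕ) : ℤ)
      = ∑ e ∈ M, ∑ B ∈ Finset.univ.filter (fun B : Finset V => ∀ v ∈ e, v ∈ B), z B := by
    have step : ∀ B : Finset V, z B * ((B.card / 2 : ℕ) : ℤ)
        = ∑ e ∈ M.filter (fun e => ∀ v ∈ e, v ∈ B), z B := by
      intro B
      by_cases hB : z B = 0
      · simp [hB]
      · have hc : (M.filter (fun e => ∀ v ∈ e, v ∈ B)).card = B.card / 2 := by
          have h0 := hactive B hB
          unfold edgesWithin at h0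
          convert h0 using 3
        rw [Finset.sum_const, hc, nsmul_eq_mul, mul_comm]
    rw [Finset.sum_congr rfl fun B _ => step B]
    simp only [Finset.sum_filter]
    exact Finset.sum_comm
  -- y part
  have hU : M.biUnion (fun e => Finset.univ.filter (· ∈ e))
      = Finset.univ.filter (fun v => ¬ isFreeV M v) := by
    ext v
    simp only [Finset.mem_biUnion, Finset.mem_filter, Finset.mem_univ, true_and, isFreeV]
    push_neg
    simp [Set.mem_setOf_eq]
  have hdisj : (↑M : Set (Sym2 V)).PairwiseDisjoint (fun e => Finset.univ.filter (· ∈ e)) := by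
    intro e he f hf hef
    simp only [Finset.disjoint_left, Finset.mem_filter, Finset.mem_univ, true_and]
    intro v hv
    exact hM.2 e he f hf hef v hv
  have hy : ∑ v ∈ Finset.univ.filter (fun v => ¬ isFreeV M v), y v
      = ∑ e ∈ M, ∑ v ∈ Finset.univ.filter (· ∈ e), y v := by
    rw [← hU, Finset.sum_biUnion hdisj]
  have hsplit : (∑ v, y v)
      = ∑ v ∈ Finset.univ.filter (fun v => isFreeV M v), y v
        + ∑ v ∈ Finset.univ.filter (fun v => ¬ isFreeV M v), y v := by
    rw [Finset.sum_filter_add_sum_filter_not]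
  rw [dualObj, hsplit, hy, hz, key]
  ring
end

section
/- (Lemma 11) Suppose z(B) ≥ 0 for every odd set B, yz(e) ≥ w(e) for every edge e (domination), and M' is a perfect matching of G with Σ_{v∈V} y(v) + Σ_B z(B)·⌊|B|/2⌋ ≤ w(M') + 8n (the dual objective is at most w(M') + 8n). Then for every (not necessarily perfect) matching M'' of G, w(M'') ≤ w(M') + 8n − Σ_{u not matched by M''} y(u). -/
open Finset
open scoped Classical

noncomputable def vsF {V : Type*} [Fintype V] (e : Sym2 V) : Finset V :=
  Finset.univ.filter (· ∈ e)

lemma vsF_mk {V : Type*} [Fintype V] (u v : V) : vsF s(u, v) = {u, v} := by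
  ext x; simp [vsF, Sym2.mem_iff]

lemma mem_vsF {V : Type*} [Fintype V] {x : V} {e : Sym2 V} : x ∈ vsF e ↔ x ∈ e := by
  simp [vsF]

lemma vsF_card {V : Type*} [Fintype V] (u v : V) (h : u ≠ v) :
    (vsF s(u, v)).card = 2 := by
  rw [vsF_mk]; exact Finset.card_pair h

lemma matching_within_card {V : Type*} [Fintype V] (G : SimpleGraph V)
    (M : Finset (Sym2 V)) (hM : IsMatchingF G M) (B : Finset V) :
    (edgesWithin M B).card ≤ B.card / 2 := by
  rw [Nat.le_div_iff_mul_le (by norm_num)]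
  have hdisj : ∀ e ∈ edgesWithin M B, ∀ f ∈ edgesWithin M B, e ≠ f →
      Disjoint (vsF e) (vsF f) := by
    intro e he f hf hef
    simp only [edgesWithin, Finset.mem_filter] at he hf
    rw [Finset.disjoint_left]
    intro x hx hx'
    rw [mem_vsF] at hx hx'
    exact hM.2 e he.1 f hf.1 hef x hx hx'
  have hsub : (edgesWithin M B).biUnion vsF ⊆ B := by
    intro x hx
    rcases Finset.mem_biUnion.1 hx with ⟨e, he, hxe⟩
    rw [mem_vsF] at hxe
    simp only [edgesWithin, Finset.mem_filter] at he
    exact he.2 x hxe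
  calc (edgesWithin M B).card * 2 = ∑ e ∈ edgesWithin M B, (vsF e).card := by
        rw [Finset.sum_congr rfl (g := fun _ => 2) ?_, Finset.sum_const, smul_eq_mul]
        intro e he
        simp only [edgesWithin, Finset.mem_filter] at he
        have hadj := hM.1 e he.1
        induction e using Sym2.ind with
        | _ u v => exact vsF_card u v ((SimpleGraph.mem_edgeSet _).1 hadj).ne
    _ = ((edgesWithin M B).biUnion vsF).card := (Finset.card_biUnion hdisj).symm
    _ ≤ B.card := Finset.card_le_card hsub

/-- Lemma 11: under nonnegativity and domination, if `M'` is a perfect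
matching whose weight is within `8n` of the dual objective, then every matching `M''`
satisfies `w(M'') ≤ w(M') + 8n - ∑_{u free in M''} y(u)`. -/
theorem matching_bound_from_dual {V : Type*} [Fintype V] (G : SimpleGraph V)
    (w : Sym2 V → ℤ) (y : V → ℤ) (z : Finset V → ℤ) (n : ℤ)
    (hsupp : ∀ B : Finset V, z B ≠ 0 → Odd B.card ∧ 3 ≤ B.card)
    (hz : ∀ B : Finset V, Odd B.card → 0 ≤ z B)
    (hdom : ∀ e ∈ G.edgeSet, w e ≤ yzE y z e)
    (M' : Finset (Sym2 V)) (hM' : IsMatchingF G M') (hM'p : IsPerfectF M')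
    (hdual : dualObj y z ≤ (∑ e ∈ M', w e) + 8 * n) :
    ∀ M'' : Finset (Sym2 V), IsMatchingF G M'' →
      ∑ e ∈ M'', w e ≤ (∑ e ∈ M', w e) + 8 * n
        - ∑ u ∈ Finset.univ.filter (fun u => isFreeV M'' u), y u := by
  intro M'' hM''
  have hedge : ∀ e ∈ M'', e ∈ G.edgeSet := hM''.1
  have h1 : ∑ e ∈ M'', w e ≤ ∑ e ∈ M'', yzE y z e :=
    Finset.sum_le_sum fun e he => hdom e (hedge e he)
  -- expand yzE
  have h2 : ∑ e ∈ M'', yzE y z e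
      = (∑ e ∈ M'', ∑ x ∈ vsF e, y x)
        + ∑ e ∈ M'', ∑ B ∈ Finset.univ.filter (fun B : Finset V => ∀ x ∈ e, x ∈ B), z B := by
    rw [← Finset.sum_add_distrib]
    refine Finset.sum_congr rfl fun e he => ?_
    have hadj := hedge e he
    induction e using Sym2.ind with
    | _ u v =>
      have hne : u ≠ v := ((SimpleGraph.mem_edgeSet _).1 hadj).ne
      have hfilter : Finset.univ.filter (fun B : Finset V => u ∈ B ∧ v ∈ B)
          = Finset.univ.filter (fun B : Finset V => ∀ x ∈ s(u, v), x ∈ B) := by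
        apply Finset.filter_congr
        intro B _
        simp [Sym2.mem_iff, forall_eq_or_imp]
      simp only [yzE, Sym2.lift_mk, vsF_mk, Finset.sum_pair hne, hfilter]
  -- first sum: matched vertices
  have hdisj : ∀ e ∈ M'', ∀ f ∈ M'', e ≠ f → Disjoint (vsF e) (vsF f) := by
    intro e he f hf hef
    rw [Finset.disjoint_left]
    intro x hx hx'
    rw [mem_vsF] at hx hx'
    exact hM''.2 e he f hf hef x hx hx' 
  have hbU : M''.biUnion vsF = Finset.univ.filter (fun u => ¬ isFreeV M'' u) := by
    ext x
    simp only [Finset.mem_biUnion, Finset.mem_filter, Finset.mem_univ, true_and, isFreeV,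
      not_forall, not_not, mem_vsF]
    tauto
  have h3 : ∑ e ∈ M'', ∑ x ∈ vsF e, y x
      = (∑ v, y v) - ∑ u ∈ Finset.univ.filter (fun u => isFreeV M'' u), y u := by
    rw [← Finset.sum_biUnion hdisj, hbU]
    have := Finset.sum_filter_add_sum_filter_not Finset.univ (fun u => isFreeV M'' u) y
    linarith [this]
  -- second sum: swap
  have h4 : ∑ e ∈ M'', ∑ B ∈ Finset.univ.filter (fun B : Finset V => ∀ x ∈ e, x ∈ B), z B
      = ∑ B : Finset V, ((edgesWithin M'' B).card : ℤ) * z B := by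
    simp only [Finset.sum_filter]
    rw [Finset.sum_comm]
    refine Finset.sum_congr rfl fun B _ => ?_
    rw [← Finset.sum_filter, Finset.sum_const, nsmul_eq_mul, edgesWithin]
    congr!
  have h5 : ∑ B : Finset V, ((edgesWithin M'' B).card : ℤ) * z B
      ≤ ∑ B : Finset V, z B * ((B.card / 2 : ℕ) : ℤ) := by
    refine Finset.sum_le_sum fun B _ => ?_
    by_cases hzB : z B = 0
    · simp [hzB]
    · have hodd := (hsupp B hzB).1
      have hz0 := hz B hodd
      rw [mul_comm]
      refine mul_le_mul_of_nonneg_left ?_ hz0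
      exact_mod_cast matching_within_card G M'' hM'' B
  have : ∑ e ∈ M'', w e ≤ dualObj y z - ∑ u ∈ Finset.univ.filter (fun u => isFreeV M'' u), y u := by
    rw [dualObj]
    linarith [h1, h2, h3, h4, h5]
  linarith [this, hdual]
end
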